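/- Let E/F be a finite Galois extension of fields with Γ = Gal(E/F), let Δ be a subgroup of Γ and B = E^Δ the fixed field of Δ. Then the map j : B ⊗_F E → Map_Δ(Γ, E) defined by j(x ⊗ y)(g) = x·g(y) is an isomorphism of B[Γ]-modules. -/

import Mathlib

set_option synthInstance.maxHeartbeats 1000000
set_option maxHeartbeats 1000000

open scoped TensorProduct

/-- The map `j : B ⊗_F E → (Γ → E)`, `j(x ⊗ y)(g) = x·g(y)`, where `B = E^Δ` for a subgroup
`Δ` of `Γ = Gal(E/F)`. -/
noncomputable def jMap (F E : Type*) [Field F] [Field E] [Algebra F E]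
    (Δ : Subgroup (E ≃ₐ[F] E)) (z : (IntermediateField.fixedField Δ) ⊗[F] E) :
    (E ≃ₐ[F] E) → E :=
  fun g => Algebra.TensorProduct.productMap (IntermediateField.fixedField Δ).val
    (g : E →ₐ[F] E) z

/-- **Fröhlich's isomorphism `B ⊗_F E ≅ Map_Δ(Γ, E)`.**
Let `E/F` be a finite Galois extension of fields with `Γ = Gal(E/F)`, let `Δ` be a subgroup
of `Γ` and `B = E^Δ` the fixed field of `Δ`.  Then the map `j : B ⊗_F E → Map_Δ(Γ, E)`
defined by `j(x ⊗ y)(g) = x·g(y)` is an isomorphism of `B[Γ]`-modules: it is injective and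
additive, with image exactly the set `Map_Δ(Γ, E)` of maps `f : Γ → E` satisfying
`f(hg) = h(f(g))` for all `h ∈ Δ`, `g ∈ Γ`; it is `B`-linear (for the `B`-module structure on
the left tensor factor); and it is `Γ`-equivariant, where `γ ∈ Γ` acts on `B ⊗_F E` by
`x ⊗ y ↦ x ⊗ γ(y)` and on maps by `(γ·f)(g) = f(gγ)`. -/
theorem stmt9 (F E : Type*) [Field F] [Field E] [Algebra F E]
    [FiniteDimensional F E] [IsGalois F E] (Δ : Subgroup (E ≃ₐ[F] E)) :
    Function.Injective (jMap F E Δ) ∧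
    (Set.range (jMap F E Δ) =
      {f : (E ≃ₐ[F] E) → E | ∀ h ∈ Δ, ∀ g : E ≃ₐ[F] E, f (h * g) = h (f g)}) ∧
    (∀ z w, jMap F E Δ (z + w) = jMap F E Δ z + jMap F E Δ w) ∧
    (∀ (b : IntermediateField.fixedField Δ) (z : (IntermediateField.fixedField Δ) ⊗[F] E)
        (g : E ≃ₐ[F] E), jMap F E Δ (b • z) g = (b : E) * jMap F E Δ z g) ∧
    (∀ (γ : E ≃ₐ[F] E) (x : IntermediateField.fixedField Δ) (y : E) (g : E ≃ₐ[F] E),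
        jMap F E Δ (x ⊗ₜ[F] (γ y)) g = jMap F E Δ (x ⊗ₜ[F] y) (g * γ)) := by
  classical
  set B := IntermediateField.fixedField Δ with hB
  -- `jMap` as an `F`-linear map
  let L : B ⊗[F] E →ₗ[F] ((E ≃ₐ[F] E) → E) :=
    LinearMap.pi fun g => (Algebra.TensorProduct.productMap B.val (g : E →ₐ[F] E)).toLinearMap
  have hfun : jMap F E Δ = ⇑L := rfl
  have hJ : ∀ (x : B) (y : E) (g : E ≃ₐ[F] E), jMap F E Δ (x ⊗ₜ[F] y) g = (x : E) * g y :=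
    fun x y g => rfl
  -- additivity
  have hadd : ∀ z w, jMap F E Δ (z + w) = jMap F E Δ z + jMap F E Δ w := by
    intro z w; rw [hfun]; exact map_add L z w
  -- `B`-linearity
  have hsmul : ∀ (b : B) (z : B ⊗[F] E) (g : E ≃ₐ[F] E),
      jMap F E Δ (b • z) g = (b : E) * jMap F E Δ z g := by
    intro b z g
    induction z using TensorProduct.induction_on with
    | zero => simp [hfun, map_zero]
    | tmul x y =>
        rw [TensorProduct.smul_tmul', hJ, hJ, smul_eq_mul]
        push_cast; ring
    | add u v hu hv =>
        rw [smul_add, hfun] at *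
        simp only [map_add, Pi.add_apply, hu, hv, mul_add]
  -- `Γ`-equivariance
  have hequiv : ∀ (γ : E ≃ₐ[F] E) (x : B) (y : E) (g : E ≃ₐ[F] E),
      jMap F E Δ (x ⊗ₜ[F] (γ y)) g = jMap F E Δ (x ⊗ₜ[F] y) (g * γ) := by
    intro γ x y g
    rw [hJ, hJ, AlgEquiv.mul_apply]
  -- injectivity
  have hinj : Function.Injective (jMap F E Δ) := by
    rw [hfun, ← LinearMap.ker_eq_bot, LinearMap.ker_eq_bot']
    intro z hz
    let ι := Fin (Module.finrank F E)
    let y : Module.Basis ι F E := Module.finBasis F E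
    let bB : Module.Basis ι B (B ⊗[F] E) := Algebra.TensorProduct.basis B y
    have hcard : Fintype.card ι = Fintype.card (E ≃ₐ[F] E) := by
      show Fintype.card (Fin (Module.finrank F E)) = _
      rw [Fintype.card_fin, ← Nat.card_eq_fintype_card, IsGalois.card_aut_eq_finrank F E]
    let e : ι ≃ (E ≃ₐ[F] E) := Fintype.equivOfCardEq hcard
    set c : ι → B := fun i => bB.repr z i with hc
    have hz' : ∀ g : E ≃ₐ[F] E, ∑ i, (c i : E) * g (y i) = 0 := by
      intro g
      have h1 : L z g = 0 := by rw [hz]; rfl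
      have h2 : z = ∑ i, c i • bB i := (bB.sum_repr z).symm
      calc ∑ i, (c i : E) * g (y i) = ∑ i, L (c i • bB i) g := by
            refine Finset.sum_congr rfl fun i _ => ?_
            have hb : bB i = (1 : B) ⊗ₜ[F] (y i) := Algebra.TensorProduct.basis_apply y i
            rw [← hfun, hsmul, hb, hJ]
            simp
        _ = L z g := by rw [h2, map_sum]; simp
        _ = 0 := h1
    let M : Matrix ι ι E := fun i j => (e i) (y j)
    have h1 : LinearIndependent E (fun g : E ≃ₐ[F] E => ((g : E →ₐ[F] E)).toLinearMap) :=
      (linearIndependent_toLinearMap F E E).comp _ (fun g₁ g₂ h => by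
        ext x
        exact congrArg (fun f : E →ₐ[F] E => f x) h)
    let ev : (E →ₗ[F] E) →ₗ[E] (ι → E) :=
      { toFun := fun T i => T (y i)
        map_add' := fun T₁ T₂ => rfl
        map_smul' := fun cE T => rfl }
    have hker : LinearMap.ker ev = ⊥ := by
      rw [LinearMap.ker_eq_bot']
      intro T hT
      exact y.ext fun i => by rw [LinearMap.zero_apply]; exact congrFun hT i
    have h2 := h1.map' ev hker
    have hrows : LinearIndependent E (fun i => M i) := h2.comp e e.injective
    have hunit : IsUnit M := Matrix.linearIndependent_rows_iff_isUnit.mp hrows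
    have hmv : M.mulVec (fun i => (c i : E)) = 0 := by
      funext i
      simpa [M, Matrix.mulVec, dotProduct, mul_comm] using hz' (e i)
    have hc0 : (fun i => (c i : E)) = (0 : ι → E) :=
      (Matrix.mulVec_injective_iff_isUnit.mpr hunit) (by rw [hmv, Matrix.mulVec_zero])
    have hcz : bB.repr z = 0 :=
      Finsupp.ext fun i => Subtype.ext (by simpa using congrFun hc0 i)
    exact bB.repr.injective (show bB.repr z = bB.repr 0 by rw [hcz, map_zero])
  refine ⟨hinj, ?_, hadd, hsmul, hequiv⟩
  -- the submodule of `Δ`-equivariant maps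
  let S : Submodule F ((E ≃ₐ[F] E) → E) :=
    { carrier := {f | ∀ h ∈ Δ, ∀ g : E ≃ₐ[F] E, f (h * g) = h (f g)}
      add_mem' := fun {f₁ f₂} hf₁ hf₂ h hh g => by
        simp only [Pi.add_apply, hf₁ h hh g, hf₂ h hh g, map_add]
      zero_mem' := fun h hh g => (map_zero h).symm
      smul_mem' := fun a f hf h hh g => by
        simp only [Pi.smul_apply, hf h hh g, map_smul] }
  have hsub : ∀ z, L z ∈ S := by
    intro z
    induction z using TensorProduct.induction_on with
    | zero => simp only [map_zero]; exact S.zero_mem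
    | tmul x yy =>
        intro h hh g
        have hx : h (x : E) = (x : E) := x.2 ⟨h, hh⟩
        rw [← hfun, hJ, hJ, map_mul, hx, AlgEquiv.mul_apply]
    | add u v hu hv =>
        rw [map_add]
        exact S.add_mem hu hv
  -- restriction to a set of coset representatives
  let Q := Quotient (QuotientGroup.rightRel Δ)
  haveI : Fintype Q := Fintype.ofFinite Q
  let res : S →ₗ[F] (Q → E) :=
    { toFun := fun f q => (f : (E ≃ₐ[F] E) → E) q.out
      map_add' := fun f g => rfl
      map_smul' := fun a f => rfl }
  have hresinj : Function.Injective res := by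
    rw [← LinearMap.ker_eq_bot, LinearMap.ker_eq_bot']
    intro f hf
    apply Subtype.ext
    funext g
    set g₀ := (Quotient.mk (QuotientGroup.rightRel Δ) g).out with hg₀
    have hmem : g * g₀⁻¹ ∈ Δ :=
      QuotientGroup.rightRel_apply.mp (Quotient.mk_out (s := QuotientGroup.rightRel Δ) g)
    have h1 : (f : (E ≃ₐ[F] E) → E) ((g * g₀⁻¹) * g₀) = (g * g₀⁻¹) ((f : _ → E) g₀) :=
      f.2 (g * g₀⁻¹) hmem g₀
    have h2 : (f : (E ≃ₐ[F] E) → E) g₀ = 0 :=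
      congrFun hf (Quotient.mk (QuotientGroup.rightRel Δ) g)
    rw [inv_mul_cancel_right] at h1
    rw [h1, h2, map_zero]
    rfl
  have hressurj : Function.Surjective res := by
    intro cQ
    refine ⟨⟨fun g => (g * ((Quotient.mk (QuotientGroup.rightRel Δ) g).out)⁻¹ : E ≃ₐ[F] E)
      (cQ (Quotient.mk (QuotientGroup.rightRel Δ) g)), ?_⟩, ?_⟩
    · intro h hh g
      have hq : (Quotient.mk (QuotientGroup.rightRel Δ) (h * g)) =
          (Quotient.mk (QuotientGroup.rightRel Δ) g) :=
        Quotient.sound (QuotientGroup.rightRel_apply.mpr (by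
          simpa using Δ.inv_mem hh))
      simp only [hq]
      rw [show h * g * ((Quotient.mk (QuotientGroup.rightRel Δ) g).out)⁻¹ =
        h * (g * ((Quotient.mk (QuotientGroup.rightRel Δ) g).out)⁻¹) by group]
      rw [AlgEquiv.mul_apply]
    · funext q
      show (q.out * ((Quotient.mk (QuotientGroup.rightRel Δ) q.out).out)⁻¹ : E ≃ₐ[F] E)
        (cQ (Quotient.mk (QuotientGroup.rightRel Δ) q.out)) = cQ q
      have : (Quotient.mk (QuotientGroup.rightRel Δ) q.out) = q := Quotient.out_eq q
      rw [this, mul_inv_cancel]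
      rfl
  -- dimension count
  haveI : FiniteDimensional F B := inferInstance
  have hrkS : Module.finrank F S = Fintype.card Q * Module.finrank F E := by
    rw [LinearEquiv.finrank_eq (LinearEquiv.ofBijective res ⟨hresinj, hressurj⟩)]
    simp [Module.finrank_pi_fintype, Finset.sum_const, Finset.card_univ]
  have hcardQ : Fintype.card Q = Δ.index := by
    rw [← Nat.card_eq_fintype_card,
      Nat.card_congr (QuotientGroup.quotientRightRelEquivQuotientLeftRel Δ),
      Subgroup.index_eq_card]
  have hrkB : Module.finrank F B = Δ.index := by
    have h1 : Module.finrank F B * Module.finrank B E = Module.finrank F E :=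
      Module.finrank_mul_finrank F B E
    have h2 : Module.finrank B E = Fintype.card Δ :=
      (IntermediateField.finrank_fixedField_eq_card Δ).trans Nat.card_eq_fintype_card
    have h3 : Δ.index * Fintype.card Δ = Fintype.card (E ≃ₐ[F] E) := by
      have := Subgroup.index_mul_card Δ
      simpa [Nat.card_eq_fintype_card] using this
    have h4 : Fintype.card (E ≃ₐ[F] E) = Module.finrank F E := Nat.card_eq_fintype_card.symm.trans (IsGalois.card_aut_eq_finrank F E)
    have hpos : 0 < Fintype.card Δ := Fintype.card_pos
    apply Nat.eq_of_mul_eq_mul_right hpos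
    rw [← h2, h1, ← h4, ← h3, h2]
  have hrk : Module.finrank F (B ⊗[F] E) = Module.finrank F S := by
    rw [Module.finrank_tensorProduct, hrkS, hcardQ, hrkB]
  let L' : (B ⊗[F] E) →ₗ[F] S := L.codRestrict S hsub
  have hinj' : Function.Injective L' := by
    intro a b hab
    apply hinj
    rw [hfun]
    exact congrArg Subtype.val hab
  have hsurj' : Function.Surjective L' :=
    (LinearMap.injective_iff_surjective_of_finrank_eq_finrank hrk).mp hinj'
  apply Set.ext
  intro f
  constructor
  · rintro ⟨z, rfl⟩
    rw [hfun]
    exact hsub z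
  · intro hf
    obtain ⟨z, hz⟩ := hsurj' ⟨f, hf⟩
    exact ⟨z, by rw [hfun]; exact congrArg Subtype.val hz⟩
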